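/- Linear lower bound on the total population: if C, L, T : [t₀, ∞) → ℝ are differentiable, satisfy the system C' = ρ_C(T+L+C)C − C/τ_C − αC², L' = ρ_L L − αLC, T' = −αTC, have C(t₀) > 0, L(t₀) > 0, T(t₀) > 0, and if ρ_C > α and (ρ_C − α)·τ_C·S(t₀) > 1 where S = C + L + T, then setting Q₀ = ((ρ_C − α)·S(t₀) − 1/τ_C)·C(t₀) one has Q₀ > 0 and S(t) ≥ S(t₀) + Q₀·(t − t₀) for all t ≥ t₀. -/

import Mathlib

lemma gronwall_lb (t₀ : ℝ) (f f' g : ℝ → ℝ) (hg : Continuous g)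
    (hf : ∀ t ∈ Set.Ici t₀, HasDerivAt f (f' t) t)
    (hge : ∀ t ∈ Set.Ici t₀, g t * f t ≤ f' t) :
    ∀ t ∈ Set.Ici t₀, f t₀ * Real.exp (∫ s in t₀..t, g s) ≤ f t := by
  intro t ht
  set G : ℝ → ℝ := fun u => ∫ s in t₀..u, g s with hGdef
  have hG : ∀ u : ℝ, HasDerivAt G (g u) u := fun u =>
    intervalIntegral.integral_hasDerivAt_right
      (hg.intervalIntegrable _ _) (hg.stronglyMeasurableAtFilter _ _) hg.continuousAt
  set ψ : ℝ → ℝ := fun u => f u * Real.exp (-(G u)) with hψdef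
  have hψd : ∀ u ∈ Set.Ici t₀, HasDerivAt ψ ((f' u - g u * f u) * Real.exp (-(G u))) u := by
    intro u hu
    have h1 : HasDerivAt (fun x => Real.exp (-(G x))) (Real.exp (-(G u)) * (-(g u))) u :=
      ((hG u).neg).exp
    have h2 := (hf u hu).mul h1
    refine h2.congr_deriv ?_
    ring
  have hmono : MonotoneOn ψ (Set.Ici t₀) := by
    apply monotoneOn_of_deriv_nonneg (convex_Ici t₀)
    · exact fun u hu => ((hψd u hu).continuousAt).continuousWithinAt
    · intro u hu
      rw [interior_Ici] at hu
      exact ((hψd u (Set.Ioi_subset_Ici_self hu)).differentiableAt).differentiableWithinAt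
    · intro u hu
      rw [interior_Ici] at hu
      rw [(hψd u (Set.Ioi_subset_Ici_self hu)).deriv]
      exact mul_nonneg (sub_nonneg.2 (hge u (Set.Ioi_subset_Ici_self hu))) (Real.exp_pos _).le
  have h0 : ψ t₀ ≤ ψ t := hmono (Set.self_mem_Ici) ht ht
  have hψ0 : ψ t₀ = f t₀ := by
    simp [hψdef, hGdef, intervalIntegral.integral_same]
  rw [hψ0] at h0
  have h1 := mul_le_mul_of_nonneg_right h0 (Real.exp_pos (G t)).le
  rw [mul_assoc, ← Real.exp_add, neg_add_cancel, Real.exp_zero, mul_one] at h1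
  exact h1

/-- Linear lower bound for the total population: under the
instability hypotheses, with `Q₀ = ((ρ_C − α)·S(t₀) − 1/τ_C)·C(t₀)` one has
`Q₀ > 0` and `S(t) ≥ S(t₀) + Q₀·(t − t₀)` for all `t ≥ t₀`. -/
theorem carT_total_population_linear_lower_bound
    (ρC ρL α τC : ℝ) (hρC : 0 < ρC) (hρL : 0 < ρL) (hα : 0 < α) (hτC : 0 < τC)
    (t₀ : ℝ) (C L T S : ℝ → ℝ)
    (hS : S = fun t => C t + L t + T t)
    (hC : ∀ t ∈ Set.Ici t₀,
      HasDerivAt C (ρC * (T t + L t + C t) * C t - C t / τC - α * (C t) ^ 2) t)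
    (hL : ∀ t ∈ Set.Ici t₀, HasDerivAt L (ρL * L t - α * L t * C t) t)
    (hT : ∀ t ∈ Set.Ici t₀, HasDerivAt T (-(α * T t * C t)) t)
    (hC0 : 0 < C t₀) (hL0 : 0 < L t₀) (hT0 : 0 < T t₀)
    (hunstable1 : ρC > α)
    (hunstable2 : (ρC - α) * τC * S t₀ > 1)
    (Q₀ : ℝ) (hQ₀ : Q₀ = ((ρC - α) * S t₀ - 1 / τC) * C t₀) :
    0 < Q₀ ∧ ∀ t ∈ Set.Ici t₀, S t₀ + Q₀ * (t - t₀) ≤ S t := by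
  have hm : Continuous fun t : ℝ => max t t₀ := continuous_id.max continuous_const
  have hmem : ∀ t : ℝ, max t t₀ ∈ Set.Ici t₀ := fun t => le_max_right t t₀
  have hmax : ∀ t ∈ Set.Ici t₀, max t t₀ = t := fun t ht => max_eq_left ht
  have hCm : Continuous fun t : ℝ => C (max t t₀) := by
    have : Continuous (C ∘ fun t : ℝ => max t t₀) :=
      continuous_iff_continuousAt.2 fun t =>
        ContinuousAt.comp ((hC _ (hmem t)).continuousAt) hm.continuousAt
    exact this
  have hLm : Continuous fun t : ℝ => L (max t t₀) := by
    have : Continuous (L ∘ fun t : ℝ => max t t₀) :=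
      continuous_iff_continuousAt.2 fun t =>
        ContinuousAt.comp ((hL _ (hmem t)).continuousAt) hm.continuousAt
    exact this
  have hTm : Continuous fun t : ℝ => T (max t t₀) := by
    have : Continuous (T ∘ fun t : ℝ => max t t₀) :=
      continuous_iff_continuousAt.2 fun t =>
        ContinuousAt.comp ((hT _ (hmem t)).continuousAt) hm.continuousAt
    exact this
  -- positivity of T
  have hTpos : ∀ t ∈ Set.Ici t₀, 0 < T t := by
    intro t ht
    have key := gronwall_lb t₀ T (fun t => -(α * T t * C t))
      (fun t => -(α * C (max t t₀))) ((continuous_const.mul hCm).neg) hT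
      (by
        intro u hu
        simp only [hmax u hu]
        apply le_of_eq; ring) t ht
    calc (0 : ℝ) < T t₀ * Real.exp _ := mul_pos hT0 (Real.exp_pos _)
      _ ≤ T t := key
  -- positivity of L
  have hLpos : ∀ t ∈ Set.Ici t₀, 0 < L t := by
    intro t ht
    have key := gronwall_lb t₀ L (fun t => ρL * L t - α * L t * C t)
      (fun t => ρL - α * C (max t t₀)) (continuous_const.sub (continuous_const.mul hCm)) hL
      (by
        intro u hu
        simp only [hmax u hu]
        apply le_of_eq; ring) t ht
    calc (0 : ℝ) < L t₀ * Real.exp _ := mul_pos hL0 (Real.exp_pos _)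
      _ ≤ L t := key
  -- positivity of C
  have hCgron := gronwall_lb t₀ C
      (fun t => ρC * (T t + L t + C t) * C t - C t / τC - α * (C t) ^ 2)
      (fun t => ρC * (T (max t t₀) + L (max t t₀) + C (max t t₀)) - 1/τC - α * C (max t t₀))
      (((continuous_const.mul ((hTm.add hLm).add hCm)).sub continuous_const).sub
        (continuous_const.mul hCm)) hC
      (by
        intro u hu
        simp only [hmax u hu]
        apply le_of_eq; ring)
  have hCpos : ∀ t ∈ Set.Ici t₀, 0 < C t := by
    intro t ht
    calc (0 : ℝ) < C t₀ * Real.exp _ := mul_pos hC0 (Real.exp_pos _)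
      _ ≤ C t := hCgron t ht
  -- derivative of S
  have hSd : ∀ t ∈ Set.Ici t₀,
      HasDerivAt S ((ρC - α) * S t * C t - C t / τC + ρL * L t) t := by
    intro t ht
    have h := ((hC t ht).add (hL t ht)).add (hT t ht)
    rw [hS]
    refine h.congr_deriv ?_
    beta_reduce
    ring
  have hφ0 : 0 < (ρC - α) * S t₀ - 1 / τC := by
    have h2 : 1 / τC < (ρC - α) * S t₀ := by
      rw [div_lt_iff₀ hτC]
      calc (1:ℝ) < (ρC - α) * τC * S t₀ := hunstable2
        _ = (ρC - α) * S t₀ * τC := by ring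
    linarith
  have hφgron := gronwall_lb t₀ (fun t => (ρC - α) * S t - 1 / τC)
      (fun t => (ρC - α) * ((ρC - α) * S t * C t - C t / τC + ρL * L t))
      (fun t => (ρC - α) * C (max t t₀))
      (continuous_const.mul hCm)
      (fun t ht => ((hSd t ht).const_mul (ρC - α)).sub_const (1/τC))
      (by
        intro u hu
        simp only [hmax u hu]
        have hL' := hLpos u hu
        have h1 : 0 ≤ (ρC - α) * (ρL * L u) :=
          mul_nonneg (by linarith) (mul_nonneg hρL.le hL'.le)
        have h2 : (ρC - α) * ((ρC - α) * S u * C u - C u / τC + ρL * L u)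
            - (ρC - α) * C u * ((ρC - α) * S u - 1 / τC) = (ρC - α) * (ρL * L u) := by
          ring
        linarith)
  have hφpos : ∀ t ∈ Set.Ici t₀, (ρC - α) * S t₀ - 1 / τC ≤ (ρC - α) * S t - 1 / τC := by
    intro t ht
    have hint : 0 ≤ ∫ s in t₀..t, (ρC - α) * C (max s t₀) := by
      apply intervalIntegral.integral_nonneg ht
      intro u hu
      exact mul_nonneg (by linarith) (hCpos _ (hmem u)).le
    calc (ρC - α) * S t₀ - 1 / τC
        ≤ ((ρC - α) * S t₀ - 1 / τC) * Real.exp (∫ s in t₀..t, (ρC - α) * C (max s t₀)) :=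
          le_mul_of_one_le_right hφ0.le (Real.one_le_exp hint)
      _ ≤ (ρC - α) * S t - 1 / τC := hφgron t ht
  -- C bounded below by C t₀
  have hCge : ∀ t ∈ Set.Ici t₀, C t₀ ≤ C t := by
    intro t ht
    have hint : 0 ≤ ∫ s in t₀..t,
        (ρC * (T (max s t₀) + L (max s t₀) + C (max s t₀)) - 1/τC - α * C (max s t₀)) := by
      apply intervalIntegral.integral_nonneg ht
      intro u hu
      have hmem' := hmem u
      have hφ := hφpos _ hmem'
      have hLp := hLpos _ hmem'
      have hTp := hTpos _ hmem'
      have heq : ρC * (T (max u t₀) + L (max u t₀) + C (max u t₀)) - 1/τC - α * C (max u t₀)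
          = ((ρC - α) * S (max u t₀) - 1/τC) + α * (L (max u t₀) + T (max u t₀)) := by
        rw [hS]; ring
      rw [heq]
      have h3 : 0 ≤ α * (L (max u t₀) + T (max u t₀)) := mul_nonneg hα.le (by linarith)
      linarith
    calc C t₀ ≤ C t₀ * Real.exp _ := le_mul_of_one_le_right hC0.le (Real.one_le_exp hint)
      _ ≤ C t := hCgron t ht
  have hQpos : 0 < Q₀ := by
    rw [hQ₀]; exact mul_pos hφ0 hC0
  refine ⟨hQpos, ?_⟩
  set W : ℝ → ℝ := fun t => S t - Q₀ * t with hWdef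
  have hWd : ∀ t ∈ Set.Ici t₀,
      HasDerivAt W ((ρC - α) * S t * C t - C t / τC + ρL * L t - Q₀) t := by
    intro t ht
    have h := (hSd t ht).sub ((hasDerivAt_id t).const_mul Q₀)
    exact h.congr_deriv (by ring)
  have hWmono : MonotoneOn W (Set.Ici t₀) := by
    apply monotoneOn_of_deriv_nonneg (convex_Ici t₀)
    · exact fun u hu => ((hWd u hu).continuousAt).continuousWithinAt
    · intro u hu
      rw [interior_Ici] at hu
      exact ((hWd u (Set.Ioi_subset_Ici_self hu)).differentiableAt).differentiableWithinAt
    · intro u hu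
      rw [interior_Ici] at hu
      have hu' : u ∈ Set.Ici t₀ := Set.Ioi_subset_Ici_self hu
      rw [(hWd u hu').deriv]
      have hφ := hφpos u hu'
      have hCg := hCge u hu'
      have hLp := hLpos u hu'
      have h1 : ((ρC - α) * S t₀ - 1/τC) * C t₀ ≤ ((ρC - α) * S u - 1/τC) * C u :=
        mul_le_mul hφ hCg hC0.le (by linarith)
      have h2 : 0 ≤ ρL * L u := mul_nonneg hρL.le hLp.le
      have h3 : (ρC - α) * S u * C u - C u / τC = ((ρC - α) * S u - 1/τC) * C u := by ring
      rw [hQ₀]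
      linarith
  intro t ht
  have := hWmono Set.self_mem_Ici ht ht
  simp only [hWdef] at this
  linarith
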